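/- Let n ≥ 3 and let A be the n×n integer matrix with A_{ii} = 3 for all i, A_{ij} = 1 whenever i − j ≡ 1 or i − j ≡ −1 (mod n) with i ≠ j, and A_{ij} = 0 otherwise. Then det A = 5 · (fib n)², where fib n denotes the n-th Fibonacci number (fib 0 = 0, fib 1 = 1). -/
import Mathlib

set_option linter.unreachableTactic false
set_option linter.unusedTactic false

open Matrix Finset

private def Td (k : ℕ) : Matrix (Fin k) (Fin k) ℤ := fun i j =>
  if (i:ℕ) = (j:ℕ) then 3 else if (i:ℕ)+1 = (j:ℕ) ∨ (j:ℕ)+1 = (i:ℕ) then 1 else 0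

private def D : ℕ → ℤ
  | 0 => 1
  | 1 => 3
  | (k+2) => 3 * D (k+1) - D k

private lemma sub_succ_succ (k : ℕ) :
    (Td (k+2)).submatrix Fin.succ Fin.succ = Td (k+1) := by
  ext i j
  simp only [submatrix_apply, Td, Fin.val_succ]
  split_ifs <;> (try simp_all) <;> omega

private lemma succAbove_one_zero (k : ℕ) : (1 : Fin (k+2)).succAbove 0 = 0 := by
  rw [Fin.succAbove_of_castSucc_lt]
  · rfl
  · simp [Fin.lt_def]

private lemma succAbove_one_succ (k : ℕ) (j : Fin k) :
    (1 : Fin (k+2)).succAbove j.succ = j.succ.succ :=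
  Fin.succAbove_of_le_castSucc _ _ (by
    simp only [Fin.le_def, Fin.coe_castSucc, Fin.val_succ, Fin.val_one]
    omega)

private lemma Td_det_rec (k : ℕ) : (Td (k+2)).det = 3 * (Td (k+1)).det - (Td k).det := by
  rw [show (k+2) = (k+1)+1 from rfl, det_succ_row_zero, Fin.sum_univ_succ, Fin.sum_univ_succ]
  have tail : ∀ j : Fin k, ((-1:ℤ)^((j.succ.succ : Fin (k+2)) : ℕ) *
      Td (k+2) 0 j.succ.succ *
      ((Td (k+2)).submatrix Fin.succ (Fin.succAbove j.succ.succ)).det) = 0 := by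
    intro j
    have h : Td (k+2) 0 j.succ.succ = 0 := by
      simp only [Td, Fin.val_succ, Fin.val_zero]
      split_ifs <;> (try simp_all) <;> omega
    rw [h]; ring
  rw [Finset.sum_eq_zero fun j _ => tail j, add_zero]
  have h00 : Td (k+2) 0 0 = 3 := by simp [Td]
  have h01 : Td (k+2) 0 (Fin.succ 0) = 1 := by
    simp only [Td, Fin.val_succ, Fin.val_zero]
    norm_num
  rw [Fin.succAbove_zero, sub_succ_succ, h00, h01]
  have hm : ((Td (k+2)).submatrix Fin.succ (Fin.succ (0:Fin (k+1))).succAbove).det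
      = (Td k).det := by
    have h1 : (Fin.succ (0:Fin (k+1))) = (1 : Fin (k+2)) := rfl
    rw [h1, det_succ_column_zero, Fin.sum_univ_succ]
    have tail2 : ∀ i : Fin k, ((-1:ℤ)^((i.succ : Fin (k+1)) : ℕ) *
        ((Td (k+2)).submatrix Fin.succ (1:Fin (k+2)).succAbove) i.succ 0 *
        ((((Td (k+2)).submatrix Fin.succ (1:Fin (k+2)).succAbove)).submatrix
          i.succ.succAbove Fin.succ).det) = 0 := by
      intro i
      have h : ((Td (k+2)).submatrix Fin.succ (1:Fin (k+2)).succAbove) i.succ 0 = 0 := by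
        simp only [submatrix_apply, succAbove_one_zero, Td, Fin.val_succ, Fin.val_zero]
        split_ifs <;> (try simp_all) <;> omega
      rw [h]; ring
    rw [Finset.sum_eq_zero fun i _ => tail2 i, add_zero]
    have e0 : ((Td (k+2)).submatrix Fin.succ (1:Fin (k+2)).succAbove) 0 0 = 1 := by
      simp only [submatrix_apply, succAbove_one_zero, Td, Fin.val_succ, Fin.val_zero]
      norm_num
    have e1 : (((Td (k+2)).submatrix Fin.succ (1:Fin (k+2)).succAbove).submatrix
        (Fin.succAbove 0) Fin.succ) = Td k := by
      ext i j
      simp only [submatrix_apply, submatrix_submatrix, Function.comp_apply,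
        Fin.succAbove_zero, succAbove_one_succ, Td, Fin.val_succ]
      split_ifs <;> (try simp_all) <;> omega
    rw [e0, e1]
    simp
  rw [hm]
  simp [Fin.val_succ]
  ring

private lemma Td_det : ∀ k, (Td k).det = D k := by
  have H : ∀ k, (Td k).det = D k ∧ (Td (k+1)).det = D (k+1) := by
    intro k
    induction k with
    | zero =>
      constructor
      · simp [D, Matrix.det_fin_zero]
      · rw [show (0+1 = 1) from rfl, Matrix.det_fin_one]
        simp [Td, D]
    | succ k ih =>
      refine ⟨ih.2, ?_⟩
      rw [show k+1+1 = k+2 from rfl, Td_det_rec, ih.1, ih.2]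
      simp [D]
  exact fun k => (H k).1

private lemma D_fib : ∀ k, D k = (Nat.fib (2*k+2) : ℤ) := by
  have H : ∀ k, D k = (Nat.fib (2*k+2) : ℤ) ∧ D (k+1) = (Nat.fib (2*(k+1)+2) : ℤ) := by
    intro k
    induction k with
    | zero =>
      constructor
      · simp [D]
      · show D 1 = (Nat.fib 4 : ℤ); decide
    | succ k ih =>
      refine ⟨ih.2, ?_⟩
      show D (k+2) = (Nat.fib (2*(k+2)+2) : ℤ)
      rw [show D (k+2) = 3 * D (k+1) - D k from rfl, ih.1, ih.2,
        show 2*(k+2)+2 = 2*k+6 from by ring, show 2*(k+1)+2 = 2*k+4 from by ring]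
      have h : Nat.fib (2*k+6) + Nat.fib (2*k+2) = 3 * Nat.fib (2*k+4) := by
        have a1 : Nat.fib (2*k+4) = Nat.fib (2*k+2) + Nat.fib (2*k+3) := Nat.fib_add_two
        have a2 : Nat.fib (2*k+5) = Nat.fib (2*k+3) + Nat.fib (2*k+4) := Nat.fib_add_two
        have a3 : Nat.fib (2*k+6) = Nat.fib (2*k+4) + Nat.fib (2*k+5) := Nat.fib_add_two
        omega
      have := congrArg (fun x : ℕ => (x : ℤ)) h
      push_cast at this ⊢
      linarith
  exact fun k => (H k).1

private lemma cassini : ∀ m : ℕ, ((Nat.fib (m+1) : ℤ))^2 + (Nat.fib (m+1) : ℤ) * (Nat.fib (m+2) : ℤ)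
    - ((Nat.fib (m+2) : ℤ))^2 = (-1)^m := by
  intro m
  induction m with
  | zero => simp
  | succ m ih =>
    have h : (Nat.fib (m+3) : ℤ) = Nat.fib (m+2) + Nat.fib (m+1) := by
      have := Nat.fib_add_two (n := m+1)
      push_cast [this]; ring
    rw [show m+1+1 = m+2 from rfl, show m+1+2 = m+3 from rfl, h, pow_succ]
    ring_nf
    ring_nf at ih
    linarith

private def Wm (n : ℕ) : Matrix (Fin n) (Fin n) ℤ := fun i j =>
  if i = j then 3
  else if ((i : ℕ) + 1) % n = (j : ℕ) ∨ ((j : ℕ) + 1) % n = (i : ℕ) then 1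
  else 0

private lemma mod_cond {n a b : ℕ} (ha : a < n) (hb : b < n) :
    ((a + 1) % n = b) ↔ (a + 1 = b ∨ (a + 1 = n ∧ b = 0)) := by
  rcases Nat.lt_or_ge (a + 1) n with h | h
  · rw [Nat.mod_eq_of_lt h]
    omega
  · have h1 : a + 1 = n := by omega
    rw [h1, Nat.mod_self]
    omega

private lemma Wm_apply (n : ℕ) (i j : Fin n) : Wm n i j =
    if (i : ℕ) = (j : ℕ) then 3
    else if (((i : ℕ) + 1 = (j : ℕ) ∨ ((i : ℕ) + 1 = n ∧ (j : ℕ) = 0)) ∨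
      ((j : ℕ) + 1 = (i : ℕ) ∨ ((j : ℕ) + 1 = n ∧ (i : ℕ) = 0))) then 1
    else 0 := by
  simp only [Wm, Fin.ext_iff]
  simp only [mod_cond i.isLt j.isLt, mod_cond j.isLt i.isLt]

-- entries of various submatrices of `Wm (m+3)`
private lemma Wsub0 (m : ℕ) :
    (Wm (m+3)).submatrix Fin.succ Fin.succ = Td (m+2) := by
  ext i j
  have hi := i.isLt; have hj := j.isLt
  simp only [submatrix_apply, Wm_apply, Td, Fin.val_succ]
  split_ifs <;> (try simp_all) <;> omega

private lemma Wsub1 (m : ℕ) :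
    ((Wm (m+3)).submatrix Fin.succ (1 : Fin (m+3)).succAbove).submatrix
      (Fin.succAbove 0) Fin.succ = Td (m+1) := by
  ext i j
  have hi := i.isLt; have hj := j.isLt
  simp only [submatrix_apply, Fin.succAbove_zero, succAbove_one_succ, Wm_apply, Td, Fin.val_succ]
  split_ifs <;> (try simp_all) <;> omega

private lemma Wsub2 (m : ℕ) :
    ((((Wm (m+3)).submatrix Fin.succ (1 : Fin (m+3)).succAbove)).submatrix
      ((Fin.last m).succ).succAbove Fin.succ).det = 1 := by
  set B := (((Wm (m+3)).submatrix Fin.succ (1 : Fin (m+3)).succAbove)).submatrix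
      ((Fin.last m).succ).succAbove Fin.succ with hBdef
  have hent : ∀ t j : Fin (m+1), B t j = Wm (m+3) ((t.castSucc).succ) (j.succ.succ) := by
    intro t j
    rw [hBdef]
    simp only [submatrix_apply, Fin.succ_last, Fin.succAbove_last, succAbove_one_succ]
  have htri : B.BlockTriangular OrderDual.toDual := by
    intro i j h
    have h' : (i : ℕ) < (j : ℕ) := h
    rw [hent]
    have hi := i.isLt; have hj := j.isLt
    simp only [Wm_apply, Fin.val_succ, Fin.coe_castSucc]
    split_ifs <;> (try simp_all) <;> omega
  rw [Matrix.det_of_lowerTriangular B htri]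
  apply Finset.prod_eq_one
  intro t _
  rw [hent]
  have ht := t.isLt
  simp only [Wm_apply, Fin.val_succ, Fin.coe_castSucc]
  split_ifs <;> (try simp_all) <;> omega

private lemma Wsub3 (m : ℕ) :
    ((Wm (m+3)).submatrix Fin.succ (Fin.last (m+2)).succAbove).submatrix
      (Fin.last (m+1)).succAbove (Fin.succAbove 0) = Td (m+1) := by
  ext i j
  have hi := i.isLt; have hj := j.isLt
  simp only [submatrix_apply, Fin.succAbove_last, Fin.succAbove_zero, Wm_apply, Td,
    Fin.val_succ, Fin.coe_castSucc]
  split_ifs <;> (try simp_all) <;> omega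

private lemma Wsub4 (m : ℕ) :
    (((Wm (m+3)).submatrix Fin.succ (Fin.last (m+2)).succAbove).submatrix
      (Fin.last (m+1)).succAbove ((Fin.last m).succ).succAbove).det = 1 := by
  set C := ((Wm (m+3)).submatrix Fin.succ (Fin.last (m+2)).succAbove).submatrix
      (Fin.last (m+1)).succAbove ((Fin.last m).succ).succAbove with hCdef
  have hent : ∀ i j : Fin (m+1), C i j = Wm (m+3) ((i.castSucc).succ) (j.castSucc.castSucc) := by
    intro i j
    rw [hCdef]
    simp only [submatrix_apply, Fin.succ_last, Fin.succAbove_last]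
  have htri : C.BlockTriangular id := by
    intro i j h
    have h' : (j : ℕ) < (i : ℕ) := h
    rw [hent]
    have hi := i.isLt; have hj := j.isLt
    simp only [Wm_apply, Fin.val_succ, Fin.coe_castSucc]
    split_ifs <;> (try simp_all) <;> omega
  rw [Matrix.det_of_upperTriangular htri]
  apply Finset.prod_eq_one
  intro t _
  rw [hent]
  have ht := t.isLt
  simp only [Wm_apply, Fin.val_succ, Fin.coe_castSucc]
  split_ifs <;> (try simp_all) <;> omega

private lemma Wminor1 (m : ℕ) :
    ((Wm (m+3)).submatrix Fin.succ (1 : Fin (m+3)).succAbove).det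
      = D (m+1) + (-1:ℤ)^(m+1) := by
  set M := (Wm (m+3)).submatrix Fin.succ (1 : Fin (m+3)).succAbove with hMdef
  rw [det_succ_column_zero, Fin.sum_univ_succ, Fin.sum_univ_castSucc]
  have h00 : M 0 0 = 1 := by
    rw [hMdef]
    simp only [submatrix_apply, succAbove_one_zero, Wm_apply, Fin.val_succ, Fin.val_zero]
    norm_num
  have hmid : ∀ i : Fin m, M (i.castSucc).succ 0 = 0 := by
    intro i
    have hi := i.isLt
    rw [hMdef]
    simp only [submatrix_apply, succAbove_one_zero, Wm_apply, Fin.val_succ, Fin.val_zero,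
      Fin.coe_castSucc]
    split_ifs <;> (try simp_all) <;> omega
  have hlast : M ((Fin.last m).succ) 0 = 1 := by
    rw [hMdef]
    simp only [submatrix_apply, succAbove_one_zero, Wm_apply, Fin.val_succ, Fin.val_zero,
      Fin.val_last]
    split_ifs <;> (try simp_all) <;> omega
  rw [h00, hlast, Finset.sum_eq_zero (fun (i : Fin m) _ => by rw [hmid i]; ring), zero_add]
  have e1 : (M.submatrix (Fin.succAbove 0) Fin.succ).det = D (m+1) := by
    rw [hMdef, Wsub1, Td_det]
  have e2 : (M.submatrix ((Fin.last m).succ).succAbove Fin.succ).det = 1 := by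
    rw [hMdef]; exact Wsub2 m
  rw [e1, e2]
  simp [Fin.val_succ, Fin.val_last]

private lemma Wminor2 (m : ℕ) :
    ((Wm (m+3)).submatrix Fin.succ (Fin.last (m+2)).succAbove).det
      = (-1:ℤ)^(m+1) * D (m+1) + 1 := by
  set L := (Wm (m+3)).submatrix Fin.succ (Fin.last (m+2)).succAbove with hLdef
  rw [det_succ_row L (Fin.last (m+1)), Fin.sum_univ_succ, Fin.sum_univ_castSucc]
  have h0 : L (Fin.last (m+1)) 0 = 1 := by
    rw [hLdef]
    simp only [submatrix_apply, Fin.succ_last, Fin.succAbove_last, Wm_apply,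
      Fin.val_last, Fin.coe_castSucc, Fin.val_zero]
    split_ifs <;> (try simp_all) <;> omega
  have hmid : ∀ j : Fin m, L (Fin.last (m+1)) ((j.castSucc).succ) = 0 := by
    intro j
    have hj := j.isLt
    rw [hLdef]
    simp only [submatrix_apply, Fin.succ_last, Fin.succAbove_last, Wm_apply,
      Fin.val_last, Fin.coe_castSucc, Fin.val_succ]
    split_ifs <;> (try simp_all) <;> omega
  have hlast : L (Fin.last (m+1)) ((Fin.last m).succ) = 1 := by
    rw [hLdef]
    simp only [submatrix_apply, Fin.succ_last, Fin.succAbove_last, Wm_apply,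
      Fin.val_last, Fin.coe_castSucc, Fin.val_succ]
    split_ifs <;> (try simp_all) <;> omega
  rw [h0, hlast, Finset.sum_eq_zero (fun (j : Fin m) _ => by rw [hmid j]; ring), zero_add]
  have e1 : (L.submatrix (Fin.last (m+1)).succAbove (Fin.succAbove 0)).det = D (m+1) := by
    rw [hLdef, Wsub3, Td_det]
  have e2 : (L.submatrix (Fin.last (m+1)).succAbove ((Fin.last m).succ).succAbove).det = 1 := by
    rw [hLdef]; exact Wsub4 m
  rw [e1, e2]
  simp only [Fin.val_last, Fin.val_zero, Fin.val_succ, add_zero, mul_one]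
  have : ((-1:ℤ))^(m+1+(m+1)) = 1 := by
    rw [show m+1+(m+1) = 2*(m+1) from by ring, pow_mul]
    norm_num
  rw [this]

private lemma W_det (m : ℕ) :
    (Wm (m+3)).det = 3 * D (m+2) - 2 * D (m+1) + 2 * (-1:ℤ)^m := by
  rw [det_succ_row_zero, Fin.sum_univ_succ, Fin.sum_univ_succ, Fin.sum_univ_castSucc]
  have h00 : Wm (m+3) 0 0 = 3 := by
    simp [Wm_apply]
  have h01 : Wm (m+3) 0 ((0 : Fin (m+2)).succ) = 1 := by
    simp only [Wm_apply, Fin.val_succ, Fin.val_zero]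
    norm_num
  have hmid : ∀ j : Fin m, Wm (m+3) 0 ((j.castSucc).succ).succ = 0 := by
    intro j
    have hj := j.isLt
    simp only [Wm_apply, Fin.val_succ, Fin.val_zero, Fin.coe_castSucc]
    split_ifs <;> (try simp_all) <;> omega
  have hlast : Wm (m+3) 0 (((Fin.last m).succ).succ) = 1 := by
    simp only [Wm_apply, Fin.val_succ, Fin.val_zero, Fin.val_last]
    split_ifs <;> (try simp_all) <;> omega
  rw [h00, h01, hlast, Finset.sum_eq_zero (fun (j : Fin m) _ => by rw [hmid j]; ring), zero_add]
  have e0 : ((Wm (m+3)).submatrix Fin.succ (Fin.succAbove 0)).det = D (m+2) := by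
    rw [Fin.succAbove_zero, Wsub0, Td_det]
  have e1 : ((Wm (m+3)).submatrix Fin.succ ((0 : Fin (m+2)).succ).succAbove).det
      = D (m+1) + (-1:ℤ)^(m+1) := by
    have : ((0 : Fin (m+2)).succ) = (1 : Fin (m+3)) := rfl
    rw [this]
    exact Wminor1 m
  have e2 : ((Wm (m+3)).submatrix Fin.succ (((Fin.last m).succ).succ).succAbove).det
      = (-1:ℤ)^(m+1) * D (m+1) + 1 := by
    have : ((Fin.last m).succ).succ = Fin.last (m+2) := by
      rw [Fin.succ_last, Fin.succ_last]
    rw [this]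
    exact Wminor2 m
  rw [e0, e1, e2]
  simp only [Fin.val_succ, Fin.val_zero, Fin.val_last, pow_zero, one_mul, mul_one, pow_one]
  have hp1 : ((-1:ℤ))^(m+1) = -(-1:ℤ)^m := by rw [pow_succ]; ring
  have hp2 : ((-1:ℤ))^(m+2) = (-1:ℤ)^m := by rw [pow_succ, pow_succ]; ring
  rw [hp1, hp2]
  ring_nf
  rw [show ((-1:ℤ))^(m*2) = 1 from by rw [mul_comm, pow_mul]; norm_num]
  ring

/-- Proposition `OddUnbalanced`: the reduced signed Laplacian `A` of the all-negative
wheel `-W_n` (diagonal `3`, entry `1` at cyclically adjacent positions, `0` otherwise)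
has determinant `5·(fib n)²`. -/
theorem stmt7 (n : ℕ) (hn : 3 ≤ n) (A : Matrix (Fin n) (Fin n) ℤ)
    (hA : ∀ i j : Fin n, A i j =
      if i = j then 3
      else if ((i : ℕ) + 1) % n = (j : ℕ) ∨ ((j : ℕ) + 1) % n = (i : ℕ) then 1
      else 0) :
    A.det = 5 * (Nat.fib n : ℤ) ^ 2 := by
  obtain ⟨m, rfl⟩ : ∃ m, n = m + 3 := ⟨n - 3, by omega⟩
  have hAW : A = Wm (m+3) := by
    ext i j
    rw [hA]
    rfl
  rw [hAW, W_det, D_fib, D_fib]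
  have hc : (Nat.fib (m+3) : ℤ) = (Nat.fib (m+1) : ℤ) + (Nat.fib (m+2) : ℤ) := by
    exact_mod_cast congrArg (fun x : ℕ => (x : ℤ)) (Nat.fib_add_two (n := m+1))
  have h1 : (Nat.fib (2*(m+2)+2) : ℤ)
      = (Nat.fib (m+3) : ℤ) * (2 * (Nat.fib (m+2) : ℤ) + (Nat.fib (m+3) : ℤ)) := by
    exact_mod_cast congrArg (fun x : ℕ => (x : ℤ)) (Nat.fib_two_mul_add_two (m+2))
  have h2 : (Nat.fib (2*(m+1)+2) : ℤ)
      = (Nat.fib (m+2) : ℤ) * (2 * (Nat.fib (m+1) : ℤ) + (Nat.fib (m+2) : ℤ)) := by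
    exact_mod_cast congrArg (fun x : ℕ => (x : ℤ)) (Nat.fib_two_mul_add_two (m+1))
  rw [h1, h2, hc]
  linear_combination (-2 : ℤ) * cassini m
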